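/- Define Z(λ) = ∫_ℝ e^{−λx⁴/8} dν(x) for λ ∈ ℂ with Re λ ≥ 0. Then Re Z(λ) > 0 for every λ with Re λ ≥ 0; in particular Z(λ) ≠ 0 on the closed right half-plane, so that F(λ) = Log Z(λ) is well defined there using the principal logarithm. -/

import Mathlib

open MeasureTheory

open Set Real Filter
open scoped Topology NNReal ENNReal

/-- The standard Gaussian probability measure on `ℝ`, with density
`(2π)^{-1/2} exp(-σ²/2)` with respect to Lebesgue measure. -/
noncomputable def gaussianNu : Measure ℝ :=
  MeasureTheory.volume.withDensity fun σ : ℝ =>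
    ENNReal.ofReal ((Real.sqrt (2 * Real.pi))⁻¹ * Real.exp (-σ ^ 2 / 2))


lemma cs_deriv (a b : ℝ) (hb : 0 < b) (n : ℝ) (hn : 0 < n) :
    HasDerivAt (fun n : ℝ => a * n - b / n) (a + b / n ^ 2) n := by
  have h1 : HasDerivAt (fun n : ℝ => a * n) a n := by
    simpa using (hasDerivAt_id n).const_mul a
  have h2 : HasDerivAt (fun n : ℝ => b / n) (b * (-(n ^ 2)⁻¹)) n := by
    simpa [div_eq_mul_inv, mul_comm] using (hasDerivAt_inv hn.ne').const_mul b
  have := h1.sub h2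
  exact this.congr_deriv (by ring)

lemma cs_image (a b : ℝ) (ha : 0 < a) (hb : 0 < b) :
    (fun n : ℝ => a * n - b / n) '' Ioi 0 = univ := by
  ext w
  simp only [mem_univ, iff_true, mem_image, mem_Ioi]
  set s := Real.sqrt (w ^ 2 + 4 * a * b) with hs
  have hs2 : s ^ 2 = w ^ 2 + 4 * a * b := Real.sq_sqrt (by positivity)
  have hws : -w < s := by
    nlinarith [Real.sqrt_nonneg (w ^ 2 + 4 * a * b), Real.sq_sqrt (by positivity : (0:ℝ) ≤ w ^ 2 + 4 * a * b)]
  have hpos : 0 < w + s := by linarith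
  refine ⟨(w + s) / (2 * a), by positivity, ?_⟩
  have hne : w + s ≠ 0 := hpos.ne'
  field_simp
  nlinarith [hs2]

lemma cs_inj (a b : ℝ) (ha : 0 < a) (hb : 0 < b) :
    InjOn (fun n : ℝ => a * n - b / n) (Ioi 0) := by
  intro p hp q hq h
  simp only [mem_Ioi] at hp hq
  simp only at h
  have hp' := hp.ne'
  have hq' := hq.ne'
  field_simp at h
  nlinarith [mul_pos hp hq, mul_pos (mul_pos ha hp) hq]

lemma cs_main (a b : ℝ) (ha : 0 < a) (hb : 0 < b) :
    ∫ n in Ioi (0:ℝ), Real.exp (-(a * n - b / n) ^ 2) = Real.sqrt π / (2 * a) := by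
  set φ := fun n : ℝ => a * n - b / n with hφ
  have hderiv : ∀ n ∈ Ioi (0:ℝ), HasDerivWithinAt φ (a + b / n ^ 2) (Ioi 0) n :=
    fun n hn => (cs_deriv a b hb n hn).hasDerivWithinAt
  have hgauss : Integrable (fun w : ℝ => Real.exp (-w ^ 2)) := by
    simpa using integrable_exp_neg_mul_sq (one_pos)
  have h1 := integral_image_eq_integral_abs_deriv_smul measurableSet_Ioi hderiv
      (cs_inj a b ha hb) (fun w => Real.exp (-w ^ 2))
  rw [cs_image a b ha hb, Measure.restrict_univ] at h1
  have hgaussval : ∫ w : ℝ, Real.exp (-w ^ 2) = Real.sqrt π := by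
    simpa using integral_gaussian 1
  have hInt : IntegrableOn (fun n => |a + b / n ^ 2| • Real.exp (-(φ n) ^ 2)) (Ioi 0) := by
    refine (integrableOn_image_iff_integrableOn_abs_deriv_smul measurableSet_Ioi hderiv
      (cs_inj a b ha hb) (fun w => Real.exp (-w ^ 2))).mp ?_
    rw [cs_image a b ha hb]
    exact hgauss.integrableOn
  have habs : ∀ n ∈ Ioi (0:ℝ), |a + b / n ^ 2| • Real.exp (-(φ n) ^ 2)
      = (a + b / n ^ 2) * Real.exp (-(φ n) ^ 2) := by
    intro n hn
    simp only [mem_Ioi] at hn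
    rw [smul_eq_mul, abs_of_pos (by positivity)]
  have hInt' : IntegrableOn (fun n => (a + b / n ^ 2) * Real.exp (-(φ n) ^ 2)) (Ioi 0) := by
    exact (integrableOn_congr_fun habs measurableSet_Ioi).mp hInt
  have h1' : ∫ n in Ioi (0:ℝ), (a + b / n ^ 2) * Real.exp (-(φ n) ^ 2) = Real.sqrt π := by
    rw [← setIntegral_congr_fun measurableSet_Ioi habs, ← h1, hgaussval]
  have hmφ : Measurable φ := by
    simp only [hφ]
    exact (measurable_id.const_mul a).sub (measurable_const.div measurable_id)
  have hmeasE : Measurable fun n : ℝ => Real.exp (-(φ n) ^ 2) :=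
    Real.measurable_exp.comp ((hmφ.pow_const 2).neg)
  have hIntE : IntegrableOn (fun n => Real.exp (-(φ n) ^ 2)) (Ioi 0) := by
    apply Integrable.mono' (hInt'.const_mul (1/a))
    · exact hmeasE.aestronglyMeasurable
    · filter_upwards [ae_restrict_mem measurableSet_Ioi] with n hn
      simp only [mem_Ioi] at hn
      rw [norm_of_nonneg (by positivity)]
      rw [one_div, ← mul_assoc]
      have h3 : (1:ℝ) ≤ a⁻¹ * (a + b / n ^ 2) := by
        rw [le_inv_mul_iff₀ ha, mul_one]
        nlinarith [div_pos hb (by positivity : (0:ℝ) < n ^ 2)]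
      nlinarith [Real.exp_pos (-(φ n)^2)]
  have hIntB : IntegrableOn (fun n => (b / n ^ 2) * Real.exp (-(φ n) ^ 2)) (Ioi 0) := by
    have h4 := hInt'.sub (hIntE.const_mul a)
    apply h4.congr
    filter_upwards with n
    simp only [Pi.sub_apply]
    ring
  have hderiv2 : ∀ n ∈ Ioi (0:ℝ), HasDerivWithinAt (fun n : ℝ => b / (a * n))
      (-(b/a) / n ^ 2) (Ioi 0) n := by
    intro n hn
    simp only [mem_Ioi] at hn
    have h2 : HasDerivAt (fun n : ℝ => (b/a) / n) ((b/a) * (-(n ^ 2)⁻¹)) n := by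
      simpa [div_eq_mul_inv, mul_comm] using (hasDerivAt_inv hn.ne').const_mul (b/a)
    have h5 : HasDerivAt (fun n : ℝ => b / (a * n)) ((b/a) * (-(n ^ 2)⁻¹)) n := by
      convert h2 using 2 with m
      rw [div_div]
    refine h5.hasDerivWithinAt.congr_deriv ?_
    field_simp
  have hinj2 : InjOn (fun n : ℝ => b / (a * n)) (Ioi 0) := by
    intro p hp q hq h
    simp only [mem_Ioi] at hp hq
    simp only at h
    field_simp at h
    exact h.symm
  have himg2 : (fun n : ℝ => b / (a * n)) '' Ioi 0 = Ioi 0 := by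
    ext m
    simp only [mem_image, mem_Ioi]
    constructor
    · rintro ⟨n, hn, rfl⟩; positivity
    · intro hm
      refine ⟨b / (a * m), by positivity, ?_⟩
      field_simp
  have h2 := integral_image_eq_integral_abs_deriv_smul measurableSet_Ioi hderiv2 hinj2
      (fun n => Real.exp (-(φ n) ^ 2))
  rw [himg2] at h2
  have h2' : ∫ n in Ioi (0:ℝ), Real.exp (-(φ n) ^ 2)
      = ∫ n in Ioi (0:ℝ), (1/a) * ((b / n ^ 2) * Real.exp (-(φ n) ^ 2)) := by
    rw [h2]
    apply setIntegral_congr_fun measurableSet_Ioi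
    intro n hn
    simp only [mem_Ioi] at hn
    have hφψ : φ (b / (a * n)) = -(φ n) := by
      simp only [hφ]
      field_simp
      ring
    simp only [smul_eq_mul]
    rw [hφψ, neg_sq]
    have habs2 : |(-(b/a)) / n ^ 2| = (b/a) / n ^ 2 := by
      rw [abs_div, abs_neg, abs_of_pos (div_pos hb ha), abs_of_pos (by positivity : (0:ℝ) < n^2)]
    rw [habs2]
    field_simp
  rw [integral_const_mul] at h2'
  have hB' : ∫ n in Ioi (0:ℝ), (b / n ^ 2) * Real.exp (-(φ n) ^ 2)
      = a * ∫ n in Ioi (0:ℝ), Real.exp (-(φ n) ^ 2) := by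
    rw [h2', ← mul_assoc]
    field_simp
  have hsplit : ∫ n in Ioi (0:ℝ), (a + b / n ^ 2) * Real.exp (-(φ n) ^ 2)
      = (∫ n in Ioi (0:ℝ), a * Real.exp (-(φ n) ^ 2))
        + ∫ n in Ioi (0:ℝ), (b / n ^ 2) * Real.exp (-(φ n) ^ 2) := by
    rw [← integral_add (hIntE.const_mul a) hIntB]
    apply setIntegral_congr_fun measurableSet_Ioi
    intro n hn
    ring
  have key : Real.sqrt π = 2 * a * ∫ n in Ioi (0:ℝ), Real.exp (-(φ n) ^ 2) := by
    rw [← h1', hsplit, integral_const_mul, hB']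
    ring
  rw [key, mul_div_cancel_left₀ _ (by positivity : (2*a) ≠ 0)]


lemma cs_even_integrable (a b : ℝ) (ha : 0 < a) (hb : 0 < b) :
    Integrable (fun n : ℝ => Real.exp (-(a * n - b / n) ^ 2)) := by
  have hm : Measurable fun n : ℝ => Real.exp (-(a * n - b / n) ^ 2) :=
    Real.measurable_exp.comp
      ((((measurable_id.const_mul a).sub (measurable_const.div measurable_id)).pow_const 2).neg)
  apply Integrable.mono' ((integrable_exp_neg_mul_sq (show 0 < a^2 by positivity)).const_mul
    (Real.exp (2*a*b)))
  · exact hm.aestronglyMeasurable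
  · filter_upwards with n
    rw [norm_of_nonneg (Real.exp_pos _).le, ← Real.exp_add]
    apply Real.exp_le_exp.mpr
    rcases eq_or_ne n 0 with rfl | hn
    · simp
      nlinarith
    · have h1 : (a * n - b / n) ^ 2 = a^2*n^2 - 2*a*b + b^2/n^2 := by
        field_simp
        ring
      have h2 : 0 ≤ b^2/n^2 := by positivity
      nlinarith

lemma cs_full (a b : ℝ) (ha : 0 < a) (hb : 0 < b) :
    ∫ n : ℝ, Real.exp (-(a * n - b / n) ^ 2) = Real.sqrt π / a := by
  have hint := cs_even_integrable a b ha hb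
  have hsplit := intervalIntegral.integral_Iic_add_Ioi (b := (0:ℝ)) hint.integrableOn hint.integrableOn
  have hneg : ∫ n in Iic (0:ℝ), Real.exp (-(a * n - b / n) ^ 2)
      = ∫ n in Ioi (0:ℝ), Real.exp (-(a * n - b / n) ^ 2) := by
    rw [show Iic (0:ℝ) = Iic (-0) by norm_num, ← integral_comp_neg_Ioi]
    apply setIntegral_congr_fun measurableSet_Ioi
    intro n hn
    have h9 : (a * -n - b / -n) ^ 2 = (a * n - b / n) ^ 2 := by ring
    simp only [h9]
  rw [hneg, cs_main a b ha hb] at hsplit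
  rw [← hsplit]
  field_simp
  ring

lemma gauss_mix (x : ℝ) :
    ∫ n : ℝ, Real.exp (-(x ^ 4 / (8 * n ^ 2)) - n ^ 2 / 2)
      = Real.sqrt (2 * π) * Real.exp (-x ^ 2 / 2) := by
  have sqrt2 : (Real.sqrt 2) ^ 2 = 2 := Real.sq_sqrt (by norm_num)
  have sqrt2pos : 0 < Real.sqrt 2 := Real.sqrt_pos.mpr (by norm_num)
  have hsqrtmul : Real.sqrt π * Real.sqrt 2 = Real.sqrt (2 * π) := by
    rw [← Real.sqrt_mul pi_pos.le, mul_comm]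
  rcases eq_or_ne x 0 with rfl | hx
  · simp only [ne_eq, OfNat.ofNat_ne_zero, not_false_eq_true, zero_pow, zero_div, neg_zero,
      zero_sub, Real.exp_zero, mul_one]
    simp_rw [show ∀ n : ℝ, -(n^2/2) = -(1/2)*n^2 from fun n => by ring]
    rw [integral_gaussian]
    rw [show π / (1/2) = 2 * π by ring]
  · set a : ℝ := (Real.sqrt 2)⁻¹ with haa
    set b : ℝ := x ^ 2 / (2 * Real.sqrt 2) with hbb
    have ha : 0 < a := by positivity
    have hb : 0 < b := by
      have : x ^ 2 > 0 := by positivity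
      positivity
    have hpoint : ∀ n : ℝ, n ≠ 0 →
        Real.exp (-(x ^ 4 / (8 * n ^ 2)) - n ^ 2 / 2)
          = Real.exp (-x ^ 2 / 2) * Real.exp (-(a * n - b / n) ^ 2) := by
      intro n hn
      rw [← Real.exp_add]
      congr 1
      have h1 : (a * n - b / n) ^ 2 = a^2*n^2 - 2*(a*b) + b^2/n^2 := by
        field_simp
        ring
      have ha2 : a ^ 2 = 1/2 := by
        rw [haa, inv_pow, sqrt2]
        norm_num
      have hab : a * b = x^2/4 := by
        rw [haa, hbb]
        rw [inv_mul_eq_div, div_div]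
        congr 1
        nlinarith [sqrt2]
      have hb2 : b ^ 2 = x^4/8 := by
        rw [hbb, div_pow]
        congr 1
        · ring
        · nlinarith [sqrt2]
      rw [h1, ha2, hab, hb2]
      field_simp
      ring
    have : ∫ n : ℝ, Real.exp (-(x ^ 4 / (8 * n ^ 2)) - n ^ 2 / 2)
        = ∫ n : ℝ, Real.exp (-x ^ 2 / 2) * Real.exp (-(a * n - b / n) ^ 2) := by
      apply integral_congr_ae
      filter_upwards [compl_mem_ae_iff.mpr (volume_singleton (a := (0:ℝ)))] with n hn
      exact hpoint n hn
    rw [this, integral_const_mul, cs_full a b ha hb, haa]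
    rw [show Real.sqrt π / (Real.sqrt 2)⁻¹ = Real.sqrt (2*π) by rw [← hsqrtmul]; field_simp]
    ring


lemma quartic_norm (z : ℂ) (x : ℝ) :
    ‖Complex.exp (-z * (x:ℂ) ^ 4)‖ = Real.exp (-z.re * x ^ 4) := by
  rw [Complex.norm_exp]
  congr 1
  simp [Complex.neg_re, Complex.mul_re]
  norm_cast
  push_cast
  ring

lemma real_exp_quartic_integrable {c : ℝ} (hc : 0 < c) :
    Integrable (fun x : ℝ => Real.exp (-c * x ^ 4)) := by
  apply Integrable.mono' ((integrable_exp_neg_mul_sq hc).const_mul (Real.exp c))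
  · exact (Real.measurable_exp.comp ((measurable_id.pow_const 4).const_mul (-c))).aestronglyMeasurable
  · filter_upwards with x
    rw [norm_of_nonneg (Real.exp_pos _).le, ← Real.exp_add]
    apply Real.exp_le_exp.mpr
    nlinarith [sq_nonneg (x^2 - 1), sq_nonneg x]

lemma cexp_quartic_integrable {z : ℂ} (hz : 0 < z.re) :
    Integrable (fun x : ℝ => Complex.exp (-z * (x:ℂ) ^ 4)) := by
  apply Integrable.mono' (real_exp_quartic_integrable hz)
  · apply Continuous.aestronglyMeasurable
    exact Complex.continuous_exp.comp (continuous_const.mul (Complex.continuous_ofReal.pow 4))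
  · filter_upwards with x
    rw [quartic_norm]

lemma poly_exp_quartic_integrable {c : ℝ} (hc : 0 < c) :
    Integrable (fun x : ℝ => x ^ 4 * Real.exp (-c * x ^ 4)) := by
  apply Integrable.mono' ((real_exp_quartic_integrable (show 0 < c/2 by linarith)).const_mul (2/c))
  · exact ((measurable_id.pow_const 4).mul
      (Real.measurable_exp.comp ((measurable_id.pow_const 4).const_mul (-c)))).aestronglyMeasurable
  · filter_upwards with x
    have h4 : (0:ℝ) ≤ x ^ 4 := by positivity
    rw [norm_of_nonneg (by positivity)]
    have key : (c/2) * x^4 * Real.exp (-(c/2) * x^4) ≤ 1 := by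
      have h1 := Real.add_one_le_exp ((c/2) * x^4)
      have h3 : (0:ℝ) < Real.exp ((c/2) * x^4) := Real.exp_pos _
      have h2 : Real.exp (-(c/2)*x^4) = (Real.exp ((c/2)*x^4))⁻¹ := by
        rw [← Real.exp_neg]
        ring_nf
      rw [h2, ← div_eq_mul_inv, div_le_one h3]
      linarith
    have hsplit : Real.exp (-c * x ^ 4) = Real.exp (-(c/2) * x^4) * Real.exp (-(c/2) * x^4) := by
      rw [← Real.exp_add]; congr 1; ring
    calc x ^ 4 * Real.exp (-c * x ^ 4)
        = (2/c) * ((c/2) * x^4 * Real.exp (-(c/2)*x^4)) * Real.exp (-(c/2) * x^4) := by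
          rw [hsplit]; field_simp
      _ ≤ (2/c) * 1 * Real.exp (-(c/2) * x^4) := by
          apply mul_le_mul_of_nonneg_right _ (Real.exp_pos _).le
          apply mul_le_mul_of_nonneg_left key (by positivity)
      _ = (2/c) * Real.exp (-(c/2) * x^4) := by ring

set_option maxHeartbeats 1000000 in
lemma real_quartic_value {b : ℝ} (hb : 0 < b) :
    ∫ x : ℝ, Real.exp (-b * x ^ 4) = 2 * Real.Gamma (5/4) * b ^ (-(1/4) : ℝ) := by
  have hint := real_exp_quartic_integrable hb
  have hsplit := intervalIntegral.integral_Iic_add_Ioi (b := (0:ℝ))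
    hint.integrableOn hint.integrableOn
  have hneg : ∫ x in Iic (0:ℝ), Real.exp (-b * x ^ 4)
      = ∫ x in Ioi (0:ℝ), Real.exp (-b * x ^ 4) := by
    rw [show Iic (0:ℝ) = Iic (-0) by norm_num, ← integral_comp_neg_Ioi]
    apply setIntegral_congr_fun measurableSet_Ioi
    intro x hx
    have h9 : -b * (-x) ^ 4 = -b * x ^ 4 := by ring
    simp only [h9]
  have hval : ∫ x in Ioi (0:ℝ), Real.exp (-b * x ^ 4)
      = b ^ (-1/4 : ℝ) * Real.Gamma (1/4 + 1) := by
    rw [← integral_exp_neg_mul_rpow (by norm_num : (0:ℝ) < 4) hb]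
    apply setIntegral_congr_fun measurableSet_Ioi
    intro x hx
    simp only [show ((4:ℝ)) = ((4:ℕ):ℝ) by norm_num, Real.rpow_natCast]
  rw [hneg, hval] at hsplit
  rw [← hsplit]
  rw [show (1:ℝ)/4 + 1 = 5/4 by norm_num, show (-1:ℝ)/4 = -(1/4) by norm_num]
  ring

lemma cexp_quartic_real_case {b : ℝ} (hb : 0 < b) :
    ∫ x : ℝ, Complex.exp (-(b:ℂ) * (x:ℂ) ^ 4)
      = (2 * Real.Gamma (5/4) : ℝ) * (b:ℂ) ^ (-(1/4) : ℂ) := by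
  have h1 : ∀ x : ℝ, Complex.exp (-(b:ℂ) * (x:ℂ) ^ 4)
      = ((Real.exp (-b * x ^ 4) : ℝ) : ℂ) := by
    intro x
    rw [Complex.ofReal_exp]
    congr 1
    push_cast
    ring
  simp_rw [h1]
  rw [show (∫ x : ℝ, ((Real.exp (-b * x ^ 4) : ℝ) : ℂ)) = ((∫ x : ℝ, Real.exp (-b * x ^ 4) : ℝ) : ℂ)
    from integral_ofReal, real_quartic_value hb]
  rw [Complex.ofReal_mul, Complex.ofReal_cpow hb.le]
  norm_num

lemma quartic_complex {z : ℂ} (hz : 0 < z.re) :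
    ∫ x : ℝ, Complex.exp (-z * (x:ℂ) ^ 4)
      = (2 * Real.Gamma (5/4) : ℝ) * z ^ (-(1/4) : ℂ) := by
  set U : Set ℂ := {w : ℂ | 0 < w.re} with hU
  have hUopen : IsOpen U := isOpen_lt continuous_const Complex.continuous_re
  have hdiff_f : DifferentiableOn ℂ (fun w => ∫ x : ℝ, Complex.exp (-w * (x:ℂ) ^ 4)) U := by
    intro z₀ hz₀
    apply DifferentiableAt.differentiableWithinAt
    have hz₀re : 0 < z₀.re := hz₀
    set ε := z₀.re / 2 with hε
    have hεpos : 0 < ε := by positivity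
    have key := hasDerivAt_integral_of_dominated_loc_of_deriv_le (μ := volume)
      (F := fun (w : ℂ) (x : ℝ) => Complex.exp (-w * (x:ℂ) ^ 4))
      (F' := fun (w : ℂ) (x : ℝ) => (-(x:ℂ) ^ 4) * Complex.exp (-w * (x:ℂ) ^ 4))
      (x₀ := z₀) (bound := fun x => x ^ 4 * Real.exp (-ε * x ^ 4)) (Metric.ball_mem_nhds z₀ hεpos)
      ?_ ?_ ?_ ?_ ?_ ?_
    · exact key.2.differentiableAt
    · filter_upwards with w
      apply Continuous.aestronglyMeasurable
      exact Complex.continuous_exp.comp (continuous_const.mul (Complex.continuous_ofReal.pow 4))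
    · exact cexp_quartic_integrable hz₀re
    · apply Continuous.aestronglyMeasurable
      exact ((Complex.continuous_ofReal.pow 4).neg).mul
        (Complex.continuous_exp.comp (continuous_const.mul (Complex.continuous_ofReal.pow 4)))
    · filter_upwards with x w hw
      rw [norm_mul, quartic_norm]
      have hwre : ε < w.re := by
        have h7 := Complex.abs_re_le_norm (w - z₀)
        rw [Complex.sub_re] at h7
        have : ‖w - z₀‖ < ε := by
          rw [Metric.mem_ball, Complex.dist_eq] at hw
          exact hw
        have := abs_lt.mp (lt_of_le_of_lt h7 this)
        simp only [hε] at *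
        linarith
      have hn4 : ‖-(x:ℂ) ^ 4‖ = x ^ 4 := by
        rw [norm_neg, norm_pow, Complex.norm_real, Real.norm_eq_abs, ← abs_pow]
        exact abs_of_nonneg (by positivity)
      rw [hn4]
      have hx4 : (0:ℝ) ≤ x ^ 4 := by positivity
      apply mul_le_mul_of_nonneg_left _ hx4
      apply Real.exp_le_exp.mpr
      nlinarith
    · exact poly_exp_quartic_integrable hεpos
    · filter_upwards with x w hw
      have hg : HasDerivAt (fun w : ℂ => -w * (x:ℂ) ^ 4) (-(x:ℂ)^4) w := by
        simpa using ((hasDerivAt_id w).neg.mul_const ((x:ℂ) ^ 4))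
      simpa [mul_comm] using hg.cexp
  have hdiff_g : DifferentiableOn ℂ
      (fun w : ℂ => ((2 * Real.Gamma (5/4) : ℝ) : ℂ) * w ^ (-(1/4) : ℂ)) U := by
    intro w hw
    apply DifferentiableAt.differentiableWithinAt
    apply DifferentiableAt.const_mul
    exact differentiableAt_id.cpow (differentiableAt_const _) (Or.inl hw)
  have heq := AnalyticOnNhd.eqOn_of_preconnected_of_frequently_eq
    (hdiff_f.analyticOnNhd hUopen) (hdiff_g.analyticOnNhd hUopen)
    (convex_halfSpace_re_gt 0).isPreconnected (show (1:ℂ) ∈ U by simp [hU])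
    ?_
  · exact heq hz
  · -- frequently equal near 1
    have hreal : Tendsto (fun k : ℕ => (1 + ((k:ℝ)+1)⁻¹ : ℝ)) atTop (𝓝 1) := by
      have h0 : Tendsto (fun k : ℕ => ((k:ℝ)+1)⁻¹) atTop (𝓝 0) :=
        tendsto_one_div_add_atTop_nhds_zero_nat.congr (by intro k; rw [one_div])
      simpa using (tendsto_const_nhds (x := (1:ℝ))).add h0
    have htend : Tendsto (fun k : ℕ => (((1 + ((k:ℝ)+1)⁻¹ : ℝ)) : ℂ)) atTop (𝓝[≠] (1:ℂ)) := by
      apply tendsto_nhdsWithin_of_tendsto_nhds_of_eventually_within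
      · rw [show ((1:ℂ)) = ((1:ℝ):ℂ) by norm_num]
        exact (Complex.continuous_ofReal.tendsto 1).comp hreal
      · filter_upwards with k
        simp only [mem_compl_iff, mem_singleton_iff]
        rw [show ((1:ℂ)) = ((1:ℝ):ℂ) by norm_num, Complex.ofReal_inj]
        have : (0:ℝ) < ((k:ℝ)+1)⁻¹ := by positivity
        intro hcontra
        linarith [hcontra]
    apply htend.frequently
    apply Frequently.of_forall
    intro k
    have hbk : (0:ℝ) < 1 + ((k:ℝ)+1)⁻¹ := by positivity
    exact cexp_quartic_real_case hbk





lemma re_cpow_neg_quarter_pos {z : ℂ} (hz : 0 < z.re) : 0 < (z ^ (-(1/4) : ℂ)).re := by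
  have hz0 : z ≠ 0 := by
    intro h
    rw [h] at hz
    simp at hz
  rw [Complex.cpow_def_of_ne_zero hz0, Complex.exp_re]
  apply mul_pos (Real.exp_pos _)
  apply Real.cos_pos_of_mem_Ioo
  have harg : |z.arg| < π / 2 := Complex.abs_arg_lt_pi_div_two_iff.mpr (Or.inl hz)
  have him : (Complex.log z * (-(1/4) : ℂ)).im = z.arg * (-(1/4)) := by
    rw [Complex.mul_im]
    norm_num [Complex.log_im]
  rw [him]
  rw [abs_lt] at harg
  constructor <;> [nlinarith [Real.pi_pos]; nlinarith [Real.pi_pos]]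

set_option maxHeartbeats 1000000 in
/-- The zero-dimensional φ⁴ partition function `Z(λ) = ∫ e^{−λx⁴/8} dν(x)` has strictly
positive real part on the closed right half-plane `Re λ ≥ 0`; in particular `Z(λ) ≠ 0`
there, so the principal logarithm `F(λ) = Log Z(λ)` is well defined. -/
theorem partition_function_positive_real_part (lam : ℂ) (hlam : 0 ≤ lam.re) :
    0 < (∫ x : ℝ, Complex.exp (-lam * (x : ℂ) ^ 4 / 8) ∂gaussianNu).re := by
  set K : ℝ := 2 * Real.Gamma (5/4) with hK
  have hKpos : 0 < K := by
    have := Real.Gamma_pos_of_pos (show (0:ℝ) < 5/4 by norm_num)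
    positivity
  set c : ℝ → ℂ := fun x => Complex.exp (-lam * (x : ℂ) ^ 4 / 8) with hc
  have hcnorm : ∀ x : ℝ, ‖c x‖ ≤ 1 := by
    intro x
    rw [hc]
    simp only
    rw [Complex.norm_exp]
    apply Real.exp_le_one_iff.mpr ?_
    have : (-lam * (x:ℂ) ^ 4 / 8).re = -lam.re * x ^ 4 / 8 := by
      simp [Complex.div_re, Complex.mul_re]
      norm_cast
      push_cast
      ring
    rw [this]
    have : (0:ℝ) ≤ x ^ 4 := by positivity
    nlinarith
  have hcmeas : Measurable c := by
    apply Complex.measurable_exp.comp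
    apply Measurable.div_const
    exact (((Complex.measurable_ofReal.comp measurable_id).pow_const 4).const_mul (-lam))
  -- the product kernel
  set F : ℝ × ℝ → ℂ := fun p =>
    ((2*π)⁻¹ * Real.exp (-(p.1 ^ 4 / (8 * p.2 ^ 2)) - p.2 ^ 2 / 2)) • c p.1 with hF
  have hE : ∀ x n : ℝ, (0:ℝ) < Real.exp (-(x ^ 4 / (8 * n ^ 2)) - n ^ 2 / 2) :=
    fun x n => Real.exp_pos _
  have hEmeas : Measurable fun p : ℝ × ℝ => Real.exp (-(p.1 ^ 4 / (8 * p.2 ^ 2)) - p.2 ^ 2 / 2) := by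
    apply Real.measurable_exp.comp
    apply Measurable.sub
    · exact (((measurable_fst.pow_const 4).div ((measurable_snd.pow_const 2).const_mul 8))).neg
    · exact (measurable_snd.pow_const 2).div_const 2
  have hFmeas' : Measurable F := (hEmeas.const_mul (2*π)⁻¹).smul (hcmeas.comp measurable_fst)
  have hFmeas : AEStronglyMeasurable F (volume.prod volume) := hFmeas'.aestronglyMeasurable
  have hEbound : ∀ x n : ℝ, Real.exp (-(x ^ 4 / (8 * n ^ 2)) - n ^ 2 / 2)
      ≤ Real.exp (-n ^ 2 / 2) := by
    intro x n
    apply Real.exp_le_exp.mpr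
    have : (0:ℝ) ≤ x ^ 4 / (8 * n ^ 2) := by positivity
    linarith
  have hgauss2 : Integrable (fun n : ℝ => Real.exp (-n ^ 2 / 2)) := by
    have := integrable_exp_neg_mul_sq (show (0:ℝ) < 1/2 by norm_num)
    apply this.congr
    filter_upwards with n
    congr 1
    ring
  have hgauss2' : Integrable (fun x : ℝ => Real.exp (-x ^ 2 / 2)) := hgauss2
  have hFnorm : ∀ x n : ℝ, ‖F (x, n)‖
      = (2*π)⁻¹ * Real.exp (-(x ^ 4 / (8 * n ^ 2)) - n ^ 2 / 2) * ‖c x‖ := by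
    intro x n
    rw [hF]
    simp only [norm_smul]
    rw [Real.norm_of_nonneg (by positivity)]
  have hFinn : ∀ x : ℝ, Integrable (fun n : ℝ => F (x, n)) := by
    intro x
    apply Integrable.mono' (hgauss2.const_mul (2*π)⁻¹)
    · exact (hFmeas'.comp measurable_prodMk_left).aestronglyMeasurable
    · filter_upwards with n
      rw [hFnorm x n]
      have h6 := mul_le_mul (mul_le_mul_of_nonneg_left (hEbound x n)
        (by positivity : (0:ℝ) ≤ (2*π)⁻¹)) (hcnorm x) (norm_nonneg _) (by positivity)
      simpa using h6
  have hFint : Integrable F (volume.prod volume) := by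
    rw [integrable_prod_iff hFmeas]
    constructor
    · filter_upwards with x
      exact hFinn x
    · apply Integrable.mono' (hgauss2'.const_mul ((2*π)⁻¹ * Real.sqrt (2*π)))
      · exact hFmeas.norm.integral_prod_right'
      · filter_upwards with x
        rw [norm_of_nonneg (integral_nonneg (fun n => norm_nonneg _))]
        have hb : ∀ n : ℝ, ‖F (x, n)‖ ≤ (2*π)⁻¹ * Real.exp (-(x ^ 4 / (8 * n ^ 2)) - n ^ 2 / 2) := by
          intro n
          rw [hFnorm x n]
          exact mul_le_of_le_one_right (by positivity) (hcnorm x)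
        calc ∫ n : ℝ, ‖F (x, n)‖
            ≤ ∫ n : ℝ, (2*π)⁻¹ * Real.exp (-(x ^ 4 / (8 * n ^ 2)) - n ^ 2 / 2) := by
              apply integral_mono ((hFinn x).norm) ?_ hb
              apply Integrable.const_mul
              apply Integrable.mono' hgauss2
              · exact (hEmeas.comp measurable_prodMk_left).aestronglyMeasurable
              · filter_upwards with n
                rw [norm_of_nonneg (hE x n).le]
                exact hEbound x n
          _ = (2*π)⁻¹ * Real.sqrt (2*π) * Real.exp (-x ^ 2 / 2) := by
              rw [integral_const_mul, gauss_mix x]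
              ring
  -- step 0: unfold the Gaussian measure
  have hgmeas : Measurable fun σ : ℝ =>
      ((Real.sqrt (2 * Real.pi))⁻¹ * Real.exp (-σ ^ 2 / 2)).toNNReal := by
    apply Measurable.real_toNNReal
    exact (Real.measurable_exp.comp ((measurable_id.pow_const 2).neg.div_const 2)).const_mul _
  have h0 : (∫ x : ℝ, c x ∂gaussianNu)
      = ∫ x : ℝ, ((Real.sqrt (2*π))⁻¹ * Real.exp (-x ^ 2 / 2)) • c x := by
    rw [show gaussianNu = volume.withDensity (fun σ : ℝ =>
      ((((Real.sqrt (2 * Real.pi))⁻¹ * Real.exp (-σ ^ 2 / 2)).toNNReal : ℝ≥0) : ℝ≥0∞)) from rfl]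
    rw [integral_withDensity_eq_integral_smul hgmeas]
    congr 1
    funext x
    rw [NNReal.smul_def, Real.coe_toNNReal _ (by positivity)]
  -- step 1: expand the density as a mixture
  have sq2pi : Real.sqrt (2*π) ^ 2 = 2*π := Real.sq_sqrt (by positivity)
  have sq2pipos : 0 < Real.sqrt (2*π) := Real.sqrt_pos.mpr (by positivity)
  have h1 : ∀ x : ℝ, ((Real.sqrt (2*π))⁻¹ * Real.exp (-x ^ 2 / 2)) • c x
      = ∫ n : ℝ, F (x, n) := by
    intro x
    have : (fun n : ℝ => F (x, n))
        = fun n : ℝ => ((2*π)⁻¹ * Real.exp (-(x ^ 4 / (8 * n ^ 2)) - n ^ 2 / 2)) • c x := rfl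
    rw [this, integral_smul_const, integral_const_mul, gauss_mix x]
    congr 1
    rw [← mul_assoc]
    congr 1
    rw [show (2*π) = Real.sqrt (2*π) ^ 2 from sq2pi.symm]
    field_simp
    rw [Real.sqrt_sq (by positivity)]
  -- Fubini
  have h2 : (∫ x : ℝ, c x ∂gaussianNu) = ∫ n : ℝ, ∫ x : ℝ, F (x, n) := by
    rw [h0]
    rw [show (∫ x : ℝ, ((Real.sqrt (2*π))⁻¹ * Real.exp (-x ^ 2 / 2)) • c x)
      = ∫ x : ℝ, ∫ n : ℝ, F (x, n) from integral_congr_ae (Eventually.of_forall h1)]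
    exact integral_integral_swap hFint
  -- inner integral evaluation
  set z : ℝ → ℂ := fun n => ((8⁻¹:ℝ):ℂ) * lam + (((8*n^2)⁻¹ : ℝ) : ℂ) with hz
  have hzre : ∀ n : ℝ, n ≠ 0 → 0 < (z n).re := by
    intro n hn
    have hre : (z n).re = 8⁻¹ * lam.re + (8*n^2)⁻¹ := by
      rw [hz]
      simp only [Complex.add_re, Complex.re_ofReal_mul, Complex.ofReal_re]
    rw [hre]
    have h8 : (0:ℝ) < (8*n^2)⁻¹ := by positivity
    nlinarith
  have hinner : ∀ n : ℝ, n ≠ 0 → (∫ x : ℝ, F (x, n))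
      = ((2*π)⁻¹ * Real.exp (-n ^ 2 / 2)) • ((K : ℝ) * (z n) ^ (-(1/4) : ℂ)) := by
    intro n hn
    have hptwise : ∀ x : ℝ, F (x, n)
        = ((2*π)⁻¹ * Real.exp (-n ^ 2 / 2)) • Complex.exp (-(z n) * (x:ℂ) ^ 4) := by
      intro x
      rw [hF]
      simp only
      have hsplitexp : Real.exp (-(x ^ 4 / (8 * n ^ 2)) - n ^ 2 / 2)
          = Real.exp (-(x ^ 4 / (8 * n ^ 2))) * Real.exp (-n ^ 2 / 2) := by
        rw [← Real.exp_add]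
        ring_nf
      rw [hsplitexp]
      rw [show ((2*π)⁻¹ * (Real.exp (-(x ^ 4 / (8 * n ^ 2))) * Real.exp (-n ^ 2 / 2)))
        = ((2*π)⁻¹ * Real.exp (-n ^ 2 / 2)) * Real.exp (-(x ^ 4 / (8 * n ^ 2))) by ring]
      rw [mul_smul]
      congr 1
      rw [Complex.real_smul, Complex.ofReal_exp, hc]
      simp only
      rw [← Complex.exp_add]
      congr 1
      have hn2 : ((n:ℂ))^2 ≠ 0 := by
        norm_cast
        positivity
      rw [hz]
      simp only [Complex.ofReal_neg, Complex.ofReal_div, Complex.ofReal_mul, Complex.ofReal_pow,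
        Complex.ofReal_inv, Complex.ofReal_ofNat]
      field_simp
      ring
    rw [show (∫ x : ℝ, F (x, n)) = ∫ x : ℝ,
        ((2*π)⁻¹ * Real.exp (-n ^ 2 / 2)) • Complex.exp (-(z n) * (x:ℂ) ^ 4)
      from integral_congr_ae (Eventually.of_forall hptwise)]
    rw [integral_smul, quartic_complex (hzre n hn)]
  -- take real parts
  have hIii : Integrable fun n : ℝ => ∫ x : ℝ, F (x, n) := by
    have := hFint.swap.integral_prod_left
    simpa [Function.comp] using this
  have hIre : (∫ x : ℝ, c x ∂gaussianNu).re = ∫ n : ℝ, (∫ x : ℝ, F (x, n)).re := by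
    rw [h2]
    have h7 := integral_re (μ := (volume : Measure ℝ)) hIii
    simpa [RCLike.re_to_complex] using h7.symm
  set h : ℝ → ℝ := fun n => (∫ x : ℝ, F (x, n)).re with hh
  have hpos : ∀ n : ℝ, n ≠ 0 → 0 < h n := by
    intro n hn
    rw [hh]
    simp only
    rw [hinner n hn]
    rw [Complex.real_smul, Complex.re_ofReal_mul, Complex.re_ofReal_mul]
    have hcp := re_cpow_neg_quarter_pos (hzre n hn)
    have hr : (0:ℝ) < (2*π)⁻¹ * Real.exp (-n ^ 2 / 2) := by positivity
    exact mul_pos hr (mul_pos hKpos hcp)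
  have hIntre : Integrable h := by
    have h8 := hIii.re
    simpa [RCLike.re_to_complex, hh] using h8
  have hae : ∀ᵐ n : ℝ, n ≠ 0 := compl_mem_ae_iff.mpr (volume_singleton (a := (0:ℝ)))
  have hnonneg : 0 ≤ᵐ[volume] h := by
    filter_upwards [hae] with n hn
    exact (hpos n hn).le
  have hsupp : ({(0:ℝ)}ᶜ : Set ℝ) ⊆ Function.support h := fun n hn => (hpos n hn).ne'
  have hcompl : (volume : Measure ℝ) ({(0:ℝ)}ᶜ) = ⊤ := by
    rw [measure_compl (measurableSet_singleton 0) (by simp), Real.volume_univ]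
    simp
  have hsupppos : 0 < (volume : Measure ℝ) (Function.support h) := by
    calc (0:ℝ≥0∞) < ⊤ := by norm_num
      _ = volume ({(0:ℝ)}ᶜ) := hcompl.symm
      _ ≤ volume (Function.support h) := measure_mono hsupp
  have final : 0 < ∫ n : ℝ, h n :=
    (integral_pos_iff_support_of_nonneg_ae hnonneg hIntre).mpr hsupppos
  calc (0:ℝ) < ∫ n : ℝ, h n := final
    _ = (∫ x : ℝ, c x ∂gaussianNu).re := hIre.symm
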